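/- Strong amalgamation over immersions with homomorphisms: let T be an h-inductive theory and A, B, C models of T with immersions f : A → B and g : A → C. Then there exist a model D of T and homomorphisms f' : B → D, g' : C → D with f' ∘ f = g' ∘ g, and such that for all b ∈ B \ f(A) and c ∈ C \ g(A), f'(b) ≠ g'(c). -/

import Mathlib

open FirstOrder FirstOrder.Language

universe u v w w'

namespace PositiveLogic

/-- Positive formulas with `n` free variables: built from `⊥`, atomic formulas,
`∧`, `∨` and `∃`. -/
inductive PosForm (L : FirstOrder.Language.{u, v}) : ℕ → Type (max u v)
  | falsum {n : ℕ} : PosForm L n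
  | equal {n : ℕ} (t u : L.Term (Fin n)) : PosForm L n
  | rel {n l : ℕ} (R : L.Relations l) (ts : Fin l → L.Term (Fin n)) : PosForm L n
  | and {n : ℕ} (φ ψ : PosForm L n) : PosForm L n
  | or {n : ℕ} (φ ψ : PosForm L n) : PosForm L n
  | ex {n : ℕ} (φ : PosForm L (n + 1)) : PosForm L n

variable {L : FirstOrder.Language.{u, v}}

/-- Realization of a positive formula in a structure. -/
def PosForm.Realize {M : Type w} [L.Structure M] :
    ∀ {n : ℕ}, PosForm L n → (Fin n → M) → Prop
  | _, .falsum, _ => False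
  | _, .equal t u, v => t.realize v = u.realize v
  | _, .rel R ts, v => Structure.RelMap R fun i => (ts i).realize v
  | _, .and φ ψ, v => φ.Realize v ∧ ψ.Realize v
  | _, .or φ ψ, v => φ.Realize v ∨ ψ.Realize v
  | _, .ex φ, v => ∃ x : M, φ.Realize (Fin.snoc v x)

/-- A positive sentence `φ` (element of `PosForm L 0`) holds in `M`. -/
def PosRealize (M : Type w) [L.Structure M] (φ : PosForm L 0) : Prop :=
  φ.Realize (Fin.elim0 : Fin 0 → M)

/-- `Diag⁺*(M)`: the set of positive `L`-sentences true in `M`. -/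
def posTheory (M : Type w) [L.Structure M] : Set (PosForm L 0) :=
  {φ | PosRealize M φ}

/-- `T_u*(M)`, identified with the set of positive `L`-sentences whose negation
(an h-universal sentence) is true in `M`. -/
def TuStar (M : Type w) [L.Structure M] : Set (PosForm L 0) :=
  {φ | ¬ PosRealize M φ}

/-- A basic h-inductive sentence `∀ x̄ (φ(x̄) → ψ(x̄))` with `φ, ψ` positive.
(A general h-inductive sentence, a finite conjunction of such, is equivalent to
the set of its conjuncts.) -/
structure HInd (L : FirstOrder.Language.{u, v}) : Type (max u v) where
  n : ℕ
  hyp : PosForm L n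
  concl : PosForm L n

/-- Realization of a basic h-inductive sentence. -/
def HInd.Realize (s : HInd L) (M : Type w) [L.Structure M] : Prop :=
  ∀ v : Fin s.n → M, s.hyp.Realize v → s.concl.Realize v

/-- `M` is a model of the h-inductive theory `T`. -/
def HModels (M : Type w) [L.Structure M] (T : Set (HInd L)) : Prop :=
  ∀ s ∈ T, s.Realize M

/-- `T_i*(M)`: the set of (basic) h-inductive `L`-sentences true in `M`. -/
def TiStar (M : Type w) [L.Structure M] : Set (HInd L) :=
  {s | s.Realize M}

/-- `T_u(T)`: the h-universal consequences of `T`, identified with the set of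
positive sentences `φ` such that `¬φ` holds in every model of `T`. -/
def TuOf (T : Set (HInd L)) : Set (PosForm L 0) :=
  {φ | ∀ (M : Type (max u v)) [L.Structure M], HModels M T → ¬ PosRealize M φ}

/-- A homomorphism is an immersion if it preserves and reflects all positive
formulas. -/
def IsImmersion {A : Type w} {B : Type w'} [L.Structure A] [L.Structure B]
    (f : A →[L] B) : Prop :=
  ∀ {n : ℕ} (φ : PosForm L n) (v : Fin n → A), φ.Realize v ↔ φ.Realize (f ∘ v)

/-- A homomorphism `f : A → B` is a strong immersion if `B`, with parameters
from `A` interpreted via `f`, models `T_i(A)`, the full h-inductive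
`L(A)`-theory of `A`. -/
def IsStrongImmersion {A : Type w} {B : Type w'} [L.Structure A] [L.Structure B]
    (f : A →[L] B) : Prop :=
  ∀ {n m : ℕ} (φ ψ : PosForm L (n + m)) (a : Fin m → A),
    (∀ v : Fin n → A, φ.Realize (Fin.append v a) → ψ.Realize (Fin.append v a)) →
    ∀ v : Fin n → B, φ.Realize (Fin.append v (f ∘ a)) → ψ.Realize (Fin.append v (f ∘ a))

/-- `M` is a positively closed (pc) model of `T`: it models `T` and every
homomorphism from `M` into a model of `T` is an immersion. -/
def IsPC (T : Set (HInd L)) (M : Type (max u v)) [L.Structure M] : Prop :=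
  HModels M T ∧
    ∀ (N : Type (max u v)) [L.Structure N], HModels N T → ∀ f : M →[L] N, IsImmersion f

/-- `T` has the joint continuation property (is positively complete). -/
def JCP (T : Set (HInd L)) : Prop :=
  ∀ (A : Type (max u v)) [L.Structure A] (B : Type (max u v)) [L.Structure B],
    HModels A T → HModels B T →
      ∃ (C : Type (max u v)) (_ : L.Structure C),
        HModels C T ∧ Nonempty (A →[L] C) ∧ Nonempty (B →[L] C)

/-- `T₁` and `T₂` are `T`-complete. -/
def TComplete (T₁ T₂ T : Set (HInd L)) : Prop :=
  ∀ (A : Type (max u v)) [L.Structure A] (B : Type (max u v)) [L.Structure B],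
    HModels A T₁ → HModels B T₂ →
      ∃ (C : Type (max u v)) (_ : L.Structure C),
        HModels C T ∧ Nonempty (A →[L] C) ∧ Nonempty (B →[L] C)

namespace PosForm

section Hom

variable {M : Type w} {N : Type w'} [L.Structure M] [L.Structure N]

theorem realize_hom (h : M →[L] N) : ∀ {n : ℕ} (φ : PosForm L n) (v : Fin n → M),
    φ.Realize v → φ.Realize (⇑h ∘ v)
  | _, .falsum, _, hr => hr.elim
  | _, .equal t u, v, hr => by
      simp only [Realize] at hr ⊢
      rw [HomClass.realize_term, HomClass.realize_term, hr]
  | _, .rel R ts, v, hr => by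
      simp only [Realize] at hr ⊢
      have : (fun i => (ts i).realize (⇑h ∘ v)) = fun i => h ((ts i).realize v) := by
        funext i; rw [HomClass.realize_term]
      rw [this]
      exact h.map_rel R _ hr
  | _, .and φ ψ, v, hr => ⟨realize_hom h φ v hr.1, realize_hom h ψ v hr.2⟩
  | _, .or φ ψ, v, hr =>
      hr.elim (fun h1 => Or.inl (realize_hom h φ v h1)) fun h1 => Or.inr (realize_hom h ψ v h1)
  | _, .ex φ, v, hr => by
      obtain ⟨x, hx⟩ := hr
      refine ⟨h x, ?_⟩
      have := realize_hom h φ _ hx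
      rwa [Fin.comp_snoc] at this

end Hom

/-- Relabelling of variables. -/
def relabel : ∀ {n m : ℕ}, (Fin n → Fin m) → PosForm L n → PosForm L m
  | _, _, σ, .falsum => .falsum
  | _, _, σ, .equal t u => .equal (t.relabel σ) (u.relabel σ)
  | _, _, σ, .rel R ts => .rel R fun i => (ts i).relabel σ
  | _, _, σ, .and φ ψ => .and (relabel σ φ) (relabel σ ψ)
  | _, _, σ, .or φ ψ => .or (relabel σ φ) (relabel σ ψ)
  | _, m, σ, .ex φ => .ex (relabel (Fin.snoc (Fin.castSucc ∘ σ) (Fin.last m)) φ)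

private theorem snoc_comp_lift {M : Type w} {n m : ℕ} (σ : Fin n → Fin m) (v : Fin m → M)
    (x : M) :
    (Fin.snoc v x : Fin (m + 1) → M) ∘
        (Fin.snoc (Fin.castSucc ∘ σ) (Fin.last m) : Fin (n + 1) → Fin (m + 1)) =
      Fin.snoc (v ∘ σ) x := by
  funext i
  refine Fin.lastCases ?_ (fun j => ?_) i <;>
    simp [Fin.snoc_castSucc, Fin.snoc_last, Function.comp]

theorem realize_relabel {M : Type w} [L.Structure M] :
    ∀ {n m : ℕ} (σ : Fin n → Fin m) (φ : PosForm L n) (v : Fin m → M),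
      (φ.relabel σ).Realize v ↔ φ.Realize (v ∘ σ)
  | _, _, σ, .falsum, v => Iff.rfl
  | _, _, σ, .equal t u, v => by simp [relabel, Realize, Term.realize_relabel]
  | _, _, σ, .rel R ts, v => by simp [relabel, Realize, Term.realize_relabel]
  | _, _, σ, .and φ ψ, v => by
      simp [relabel, Realize, realize_relabel σ φ v, realize_relabel σ ψ v]
  | _, _, σ, .or φ ψ, v => by
      simp [relabel, Realize, realize_relabel σ φ v, realize_relabel σ ψ v]
  | n, m, σ, .ex φ, v => by
      simp only [relabel, Realize]
      exact exists_congr fun x => by rw [realize_relabel, snoc_comp_lift]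

/-- Existential closure of the last `k` variables. -/
def exs : ∀ {m k : ℕ}, PosForm L (m + k) → PosForm L m
  | _, 0, φ => φ
  | _, k + 1, φ => exs (k := k) φ.ex

theorem realize_exs {M : Type w} [L.Structure M] :
    ∀ {m k : ℕ} (φ : PosForm L (m + k)) (v : Fin m → M),
      (exs φ).Realize v ↔ ∃ w : Fin k → M, φ.Realize (Fin.append v w)
  | m, 0, φ, v => by
      constructor
      · exact fun h => ⟨Fin.elim0, by rwa [Fin.append_elim0]⟩
      · rintro ⟨w, hw⟩
        rwa [Subsingleton.elim w Fin.elim0, Fin.append_elim0] at hw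
  | m, k + 1, φ, v => by
      rw [show (exs φ : PosForm L m) = exs (k := k) φ.ex from rfl, realize_exs φ.ex v]
      constructor
      · rintro ⟨w, x, hx⟩
        exact ⟨Fin.snoc w x, by rwa [Fin.append_snoc]⟩
      · rintro ⟨w, hw⟩
        refine ⟨Fin.init w, w (Fin.last k), ?_⟩
        rw [← Fin.append_snoc, Fin.snoc_init_self]
        exact hw

/-- Finite conjunction. -/
def ands {n : ℕ} : List (PosForm L n) → PosForm L n → PosForm L n
  | [], ψ => ψ
  | φ :: l, ψ => .and φ (ands l ψ)

theorem realize_ands {M : Type w} [L.Structure M] {n : ℕ} :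
    ∀ (l : List (PosForm L n)) (ψ : PosForm L n) (v : Fin n → M),
      (ands l ψ).Realize v ↔ (∀ φ ∈ l, φ.Realize v) ∧ ψ.Realize v
  | [], ψ, v => by simp [ands]
  | φ :: l, ψ, v => by
      simp only [ands, Realize, realize_ands l ψ v, List.mem_cons]
      constructor
      · rintro ⟨h1, h2, h3⟩
        exact ⟨fun χ hχ => hχ.elim (fun e => e ▸ h1) (h2 χ), h3⟩
      · rintro ⟨h1, h2⟩
        exact ⟨h1 φ (Or.inl rfl), fun χ hχ => h1 χ (Or.inr hχ), h2⟩

/-- Translation to a bounded formula. -/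
def toBF : ∀ {n : ℕ}, PosForm L n → L.BoundedFormula Empty n
  | _, .falsum => ⊥
  | _, .equal t u => Term.bdEqual (t.relabel Sum.inr) (u.relabel Sum.inr)
  | _, .rel R ts => R.boundedFormula fun i => (ts i).relabel Sum.inr
  | _, .and φ ψ => toBF φ ⊓ toBF ψ
  | _, .or φ ψ => toBF φ ⊔ toBF ψ
  | _, .ex φ => (toBF φ).ex

theorem realize_toBF {M : Type w} [L.Structure M] :
    ∀ {n : ℕ} (φ : PosForm L n) (xs : Empty → M) (v : Fin n → M),
      (toBF φ).Realize xs v ↔ φ.Realize v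
  | _, .falsum, xs, v => by simp [toBF, Realize]
  | _, .equal t u, xs, v => by
      simp [toBF, Realize, BoundedFormula.realize_bdEqual, Term.realize_relabel,
        Sum.elim_comp_inr]
  | _, .rel R ts, xs, v => by
      simp [toBF, Realize, BoundedFormula.realize_rel, Term.realize_relabel, Sum.elim_comp_inr]
  | _, .and φ ψ, xs, v => by
      simp [toBF, Realize, BoundedFormula.realize_inf, realize_toBF φ xs v, realize_toBF ψ xs v]
  | _, .or φ ψ, xs, v => by
      simp [toBF, Realize, BoundedFormula.realize_sup, realize_toBF φ xs v, realize_toBF ψ xs v]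
  | _, .ex φ, xs, v => by
      simp only [toBF, Realize, BoundedFormula.realize_ex]
      exact exists_congr fun x => realize_toBF φ xs _

end PosForm

/-- Key lemma: given finitely many positive facts about tuples in `C` and finitely many
elements of `A`, there is a map `κ : C → B`, with range inside the range of `f`, satisfying
those facts in `B` and compatible with `f` and `g` on the given elements of `A`. -/
theorem exists_witness {A B C : Type w} [L.Structure A] [L.Structure B] [L.Structure C]
    (f : A →[L] B) (g : A →[L] C) (hg : IsImmersion g) (a0 : A)
    (ds : List (Σ n : ℕ, PosForm L n × (Fin n → C)))
    (hds : ∀ d ∈ ds, d.2.1.Realize d.2.2) (as : List A) :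
    ∃ κ : C → B, (∀ d ∈ ds, d.2.1.Realize (κ ∘ d.2.2)) ∧
      (∀ a ∈ as, κ (g a) = f a) ∧ ∀ c, κ c ∈ Set.range f := by
  classical
  set Γ : List C := g a0 :: ((ds.flatMap fun d => List.ofFn d.2.2) ++ as.map g) with hΓdef
  set k := Γ.length with hkdef
  have hk : 0 < k := by simp [hkdef, hΓdef]
  set ι : Fin k → C := Γ.get with hιdef
  set ρ : C → Fin k := fun c => if h : ∃ i, Γ.get i = c then h.choose else ⟨0, hk⟩ with hρdef
  have hρ : ∀ c ∈ Γ, ι (ρ c) = c := by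
    intro c hc
    obtain ⟨i, hi⟩ := List.mem_iff_get.mp hc
    have hex : ∃ j, Γ.get j = c := ⟨i, hi⟩
    rw [hρdef]
    simp only [dif_pos hex]
    exact hex.choose_spec
  set m := as.length with hmdef
  set abar : Fin m → A := as.get with habar
  set Θ : PosForm L k :=
    PosForm.ands (ds.map fun d => d.2.1.relabel fun i => ρ (d.2.2 i))
      (.equal (Term.var ⟨0, hk⟩) (Term.var ⟨0, hk⟩)) with hΘdef
  set Ξ : PosForm L m :=
    PosForm.exs (.and (Θ.relabel (Fin.natAdd m))
      (PosForm.ands ((List.finRange m).map fun i =>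
          .equal (Term.var (Fin.natAdd m (ρ (g (abar i))))) (Term.var (Fin.castAdd k i)))
        (.equal (Term.var (Fin.natAdd m ⟨0, hk⟩)) (Term.var (Fin.natAdd m ⟨0, hk⟩))))) with hΞdef
  have happmem : ∀ (x : Fin m → C) (i : Fin k), Fin.append x ι (Fin.natAdd m i) = ι i :=
    fun x i => Fin.append_right _ _ _
  have hΞC : Ξ.Realize (⇑g ∘ abar) := by
    rw [hΞdef, PosForm.realize_exs]
    refine ⟨ι, ?_, ?_⟩
    · rw [PosForm.realize_relabel]
      have hres : (Fin.append (⇑g ∘ abar) ι ∘ Fin.natAdd m) = ι := by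
        funext i; exact happmem _ i
      rw [hres, hΘdef, PosForm.realize_ands]
      refine ⟨?_, rfl⟩
      intro χ hχ
      obtain ⟨d, hd, rfl⟩ := List.mem_map.mp hχ
      rw [PosForm.realize_relabel]
      have hcomp : (ι ∘ fun i => ρ (d.2.2 i)) = d.2.2 := by
        funext i
        refine hρ _ ?_
        rw [hΓdef]
        exact List.mem_cons_of_mem _
          (List.mem_append_left _ (List.mem_flatMap.mpr ⟨d, hd, List.mem_ofFn.mpr ⟨i, rfl⟩⟩))
      rw [hcomp]
      exact hds d hd
    · rw [PosForm.realize_ands]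
      refine ⟨?_, rfl⟩
      intro χ hχ
      obtain ⟨i, _, rfl⟩ := List.mem_map.mp hχ
      have hmem : g (abar i) ∈ Γ := by
        rw [hΓdef]
        exact List.mem_cons_of_mem _
          (List.mem_append_right _ (List.mem_map.mpr ⟨abar i, List.get_mem as i, rfl⟩))
      show Term.realize _ _ = Term.realize _ _
      rw [Term.realize_var, Term.realize_var, happmem, Fin.append_left, hρ _ hmem]
      rfl
  have hΞA : Ξ.Realize abar := (hg Ξ abar).mpr hΞC
  rw [hΞdef, PosForm.realize_exs] at hΞA
  obtain ⟨e, heΘ, heEq⟩ := hΞA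
  rw [PosForm.realize_relabel] at heΘ
  have happ : (Fin.append abar e ∘ Fin.natAdd m) = e := by
    funext i; exact Fin.append_right _ _ _
  rw [happ] at heΘ
  rw [PosForm.realize_ands] at heEq
  have hEqs : ∀ i : Fin m, e (ρ (g (abar i))) = abar i := by
    intro i
    have h1 := heEq.1 _ (List.mem_map.mpr ⟨i, List.mem_finRange i, rfl⟩)
    have h2 : Fin.append abar e (Fin.natAdd m (ρ (g (abar i)))) =
        Fin.append abar e (Fin.castAdd k i) := h1
    rwa [Fin.append_right, Fin.append_left] at h2
  have hΘB : Θ.Realize (⇑f ∘ e) := PosForm.realize_hom f Θ e heΘ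
  refine ⟨fun c => f (e (ρ c)), ?_, ?_, fun c => ⟨e (ρ c), rfl⟩⟩
  · intro d hd
    rw [hΘdef, PosForm.realize_ands] at hΘB
    have hconj := hΘB.1 _ (List.mem_map.mpr ⟨d, hd, rfl⟩)
    rw [PosForm.realize_relabel] at hconj
    exact hconj
  · intro a ha
    obtain ⟨i, hi⟩ := List.mem_iff_get.mp ha
    have h2 : e (ρ (g (as.get i))) = as.get i := hEqs i
    rw [hi] at h2
    show f (e (ρ (g a))) = f a
    rw [h2]

section Sentences

variable {α : Type w'}

/-- The sentence with constants asserting a positive fact. -/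
def conSent {n : ℕ} (φ : PosForm L n) (w : Fin n → α) : L[[α]].Sentence :=
  ((L.lhomWithConstants α).onFormula (PosForm.toBF φ).toFormula).subst
    (Sum.elim (fun e => Empty.elim e) fun i => (L.con (w i)).term)

theorem realize_conSent (M : Type*) [L[[α]].Structure M] [L.Structure M]
    [(L.lhomWithConstants α).IsExpansionOn M] {n : ℕ} (φ : PosForm L n) (w : Fin n → α) :
    M ⊨ conSent φ w ↔ φ.Realize fun i => ((L.con (w i)).term.realize (default : Empty → M)) := by
  rw [conSent, Sentence.Realize, Formula.Realize, BoundedFormula.realize_subst]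
  rw [show (BoundedFormula.Realize (((L.lhomWithConstants α).onFormula
      (PosForm.toBF φ).toFormula)) (fun a => ((Sum.elim (fun e => Empty.elim e)
      fun i => (L.con (w i)).term) a).realize (default : Empty → M)) default) =
      (Formula.Realize (((L.lhomWithConstants α).onFormula (PosForm.toBF φ).toFormula))
      (fun a => ((Sum.elim (fun e => Empty.elim e)
      fun i => (L.con (w i)).term) a).realize (default : Empty → M))) from rfl]
  rw [LHom.realize_onFormula, BoundedFormula.realize_toFormula, PosForm.realize_toBF]
  exact Iff.rfl

/-- The sentence with constants expressing a basic h-inductive sentence. -/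
def hindSent (s : HInd L) : L[[α]].Sentence :=
  (L.lhomWithConstants α).onSentence ((PosForm.toBF s.hyp).imp (PosForm.toBF s.concl)).alls

theorem realize_hindSent (M : Type*) [L[[α]].Structure M] [L.Structure M]
    [(L.lhomWithConstants α).IsExpansionOn M] (s : HInd L) :
    M ⊨ (hindSent s : L[[α]].Sentence) ↔ s.Realize M := by
  rw [hindSent, LHom.realize_onSentence, Sentence.Realize, BoundedFormula.realize_alls]
  refine forall_congr' fun xs => ?_
  rw [BoundedFormula.realize_imp, PosForm.realize_toBF, PosForm.realize_toBF]

/-- The sentence asserting that two constants are equal. -/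
def eqSent (x y : α) : L[[α]].Sentence :=
  Term.equal (L.con x).term (L.con y).term

theorem realize_eqSent (M : Type*) [L[[α]].Structure M] (x y : α) :
    M ⊨ (eqSent x y : L[[α]].Sentence) ↔
      ((L.con x).term.realize (default : Empty → M)) =
        ((L.con y).term.realize (default : Empty → M)) := by
  rw [eqSent, Sentence.Realize, Formula.realize_equal]

/-- The sentence asserting that two constants are distinct. -/
def neSent (x y : α) : L[[α]].Sentence :=
  (eqSent x y).not

theorem realize_neSent (M : Type*) [L[[α]].Structure M] (x y : α) :
    M ⊨ (neSent x y : L[[α]].Sentence) ↔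
      ¬ ((L.con x).term.realize (default : Empty → M)) =
        ((L.con y).term.realize (default : Empty → M)) := by
  rw [neSent, Sentence.Realize, Formula.realize_not, ← Sentence.Realize, realize_eqSent]

end Sentences

/-- strong amalgamation of two immersions over models of `T`. -/
theorem strong_amalgamation_of_immersions (T : Set (HInd L))
    (A B C : Type (max u v)) [L.Structure A] [L.Structure B] [L.Structure C]
    (hA : HModels A T) (hB : HModels B T) (hC : HModels C T)
    (f : A →[L] B) (g : A →[L] C) (hf : IsImmersion f) (hg : IsImmersion g) :
    ∃ (D : Type (max u v)) (_ : L.Structure D) (f' : B →[L] D) (g' : C →[L] D),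
      HModels D T ∧ f'.comp f = g'.comp g ∧
        ∀ b c, b ∉ Set.range f → c ∉ Set.range g → f' b ≠ g' c := by
  classical
  by_cases hBe : IsEmpty B
  · -- `B` is empty, hence so is `A`; use `D := C`.
    haveI : IsEmpty A := ⟨fun a => hBe.false (f a)⟩
    have relcast : ∀ (M : Type (max u v)) (_ : L.Structure M) (R : L.Relations 0)
        (x y : Fin 0 → M), Structure.RelMap R x → Structure.RelMap R y := by
      intro M _ R x y h
      rwa [Subsingleton.elim y x]
    have transfer : ∀ R : L.Relations 0, Structure.RelMap (M := B) R Fin.elim0 →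
        Structure.RelMap (M := C) R Fin.elim0 := by
      intro R hR
      have hBside : PosForm.Realize (M := B) (.rel R fun i => i.elim0) (⇑f ∘ Fin.elim0) :=
        relcast B _ R Fin.elim0 _ hR
      have hAside := (hf (.rel R fun i => i.elim0) Fin.elim0).mpr hBside
      have hCside := (hg (.rel R fun i => i.elim0) Fin.elim0).mp hAside
      exact relcast C _ R _ Fin.elim0 hCside
    let f0 : B →[L] C :=
      { toFun := fun b => (hBe.false b).elim
        map_fun' := fun {n} F v => (hBe.false (Structure.funMap F v)).elim
        map_rel' := fun {n} R v hv => by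
          cases n with
          | zero =>
            have h0 : Structure.RelMap (M := C) R Fin.elim0 :=
              transfer R (by rwa [Subsingleton.elim Fin.elim0 v])
            rwa [Subsingleton.elim ((fun b => (hBe.false b).elim) ∘ v) Fin.elim0]
          | succ n => exact (hBe.false (v 0)).elim }
    refine ⟨C, ‹L.Structure C›, f0, Hom.id L C, hC, ?_, ?_⟩
    · exact Hom.ext fun a => isEmptyElim a
    · intro b c _ _
      exact (hBe.false b).elim
  · -- main case: `B` is nonempty, hence `A` and `C` are nonempty.
    haveI hBne : Nonempty B := not_isEmpty_iff.mp hBe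
    have hAne : Nonempty A := by
      obtain ⟨b⟩ := hBne
      have hB1 : PosForm.Realize (M := B)
          (PosForm.ex (.equal (Term.var 0) (Term.var 0)) : PosForm L 0)
          (⇑f ∘ Fin.elim0) := by
        simp only [PosForm.Realize]
        exact ⟨b, trivial⟩
      obtain ⟨a, -⟩ := (hf (PosForm.ex (.equal (Term.var 0) (Term.var 0)) : PosForm L 0)
        Fin.elim0).mpr hB1
      exact ⟨a⟩
    obtain ⟨a0⟩ := hAne
    -- the theory with constants from `B ⊕ C`
    set tset : L[[B ⊕ C]].Theory := {σ | ∃ s ∈ T, σ = hindSent s} with htset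
    set dBset : L[[B ⊕ C]].Theory := {σ | ∃ (n : ℕ) (φ : PosForm L n) (v : Fin n → B),
      φ.Realize v ∧ σ = conSent φ (Sum.inl ∘ v)} with hdBset
    set dCset : L[[B ⊕ C]].Theory := {σ | ∃ (n : ℕ) (φ : PosForm L n) (v : Fin n → C),
      φ.Realize v ∧ σ = conSent φ (Sum.inr ∘ v)} with hdCset
    set idset : L[[B ⊕ C]].Theory :=
      {σ | ∃ a : A, σ = eqSent (Sum.inl (f a) : B ⊕ C) (Sum.inr (g a))} with hidset
    set neset : L[[B ⊕ C]].Theory := {σ | ∃ b c, b ∉ Set.range f ∧ c ∉ Set.range g ∧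
      σ = neSent (Sum.inl b : B ⊕ C) (Sum.inr c)} with hneset
    have hsat : (tset ∪ dBset ∪ dCset ∪ idset ∪ neset).IsSatisfiable := by
      rw [Theory.isSatisfiable_iff_isFinitelySatisfiable]
      intro T0 hT0
      -- choice of data for the diagram-of-`C` sentences in `T0`
      have hchC : ∀ σ : {x // x ∈ dCset}, ∃ p : Σ n : ℕ, PosForm L n × (Fin n → C),
          p.2.1.Realize p.2.2 ∧ σ.1 = conSent p.2.1 (Sum.inr ∘ p.2.2) := by
        rintro ⟨σ, n, φ, v, h1, h2⟩
        exact ⟨⟨n, φ, v⟩, h1, h2⟩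
      choose dC hdC1 hdC2 using hchC
      have hchI : ∀ σ : {x // x ∈ idset},
          ∃ a : A, σ.1 = eqSent (Sum.inl (f a) : B ⊕ C) (Sum.inr (g a)) := fun σ => σ.2
      choose aOf haOf using hchI
      obtain ⟨κ, hκ1, hκ2, hκ3⟩ := exists_witness f g hg a0
        (T0.toList.filterMap fun σ => if h : σ ∈ dCset then some (dC ⟨σ, h⟩) else none)
        (by
          intro d hd
          obtain ⟨σ, hσ, hσ2⟩ := List.mem_filterMap.mp hd
          by_cases h : σ ∈ dCset
          · rw [dif_pos h] at hσ2
            obtain rfl := Option.some.inj hσ2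
            exact hdC1 ⟨σ, h⟩
          · rw [dif_neg h] at hσ2; cases hσ2)
        (T0.toList.filterMap fun σ => if h : σ ∈ idset then some (aOf ⟨σ, h⟩) else none)
      -- make `B` into a structure with constants
      letI : (constantsOn (B ⊕ C)).Structure B :=
        constantsOn.structure (Sum.elim id κ)
      have hcon : ∀ x : B ⊕ C,
          ((L.con x).term.realize (default : Empty → B)) = Sum.elim id κ x := fun x => rfl
      have hmod : ∀ σ ∈ T0, B ⊨ σ := by
        intro σ hσ0
        rcases hT0 hσ0 with ((((hσ | hσ) | hσ) | hσ) | hσ)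
        · obtain ⟨s, hsT, rfl⟩ := hσ
          rw [realize_hindSent]
          exact hB s hsT
        · obtain ⟨n, φ, v, h1, rfl⟩ := hσ
          rw [realize_conSent]
          have hv : (fun i => ((L.con ((Sum.inl ∘ v : Fin n → B ⊕ C) i)).term.realize (default : Empty → B)))
              = v := by funext i; rw [hcon]; rfl
          rw [hv]; exact h1
        · have hmem : σ ∈ dCset := hσ
          rw [show σ = conSent (dC ⟨σ, hmem⟩).2.1 (Sum.inr ∘ (dC ⟨σ, hmem⟩).2.2) from hdC2 ⟨σ, hmem⟩, realize_conSent]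
          have hv : (fun i => ((L.con ((Sum.inr ∘ (dC ⟨σ, hmem⟩).2.2 : Fin (dC ⟨σ, hmem⟩).1 → B ⊕ C) i)).term.realize
              (default : Empty → B))) = κ ∘ (dC ⟨σ, hmem⟩).2.2 := by
            funext i; rw [hcon]; rfl
          rw [hv]
          refine hκ1 _ (List.mem_filterMap.mpr ⟨σ, Finset.mem_toList.mpr hσ0, ?_⟩)
          rw [dif_pos hmem]
        · have hmem : σ ∈ idset := hσ
          rw [show σ = eqSent (Sum.inl (f (aOf ⟨σ, hmem⟩)) : B ⊕ C) (Sum.inr (g (aOf ⟨σ, hmem⟩))) from haOf ⟨σ, hmem⟩, realize_eqSent, hcon, hcon]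
          show f (aOf ⟨σ, hmem⟩) = κ (g (aOf ⟨σ, hmem⟩))
          refine (hκ2 _ (List.mem_filterMap.mpr ⟨σ, Finset.mem_toList.mpr hσ0, ?_⟩)).symm
          rw [dif_pos hmem]
        · obtain ⟨b, c, hb, hc, rfl⟩ := hσ
          rw [realize_neSent, hcon, hcon]
          intro hbc
          obtain ⟨a, ha⟩ := hκ3 c
          exact hb ⟨a, by rw [ha]; exact hbc.symm⟩
      haveI : Theory.Model B (T0 : L[[B ⊕ C]].Theory) :=
        ⟨fun σ hσ => hmod σ (Finset.mem_coe.mp hσ)⟩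
      exact ⟨Theory.ModelType.of _ B⟩
    -- the amalgam
    obtain ⟨M⟩ := hsat
    letI : L.Structure M := (L.lhomWithConstants (B ⊕ C)).reduct M
    haveI : (L.lhomWithConstants (B ⊕ C)).IsExpansionOn (M : Type (max u v)) :=
      LHom.isExpansionOn_reduct _ _
    have hreal : ∀ σ, σ ∈ tset ∪ dBset ∪ dCset ∪ idset ∪ neset → (M : Type (max u v)) ⊨ σ :=
      fun σ h => Theory.realize_sentence_of_mem _ h
    -- homomorphism from a diagram inclusion
    have mkHom : ∀ (X : Type (max u v)) (inst : L.Structure X) (j : X → B ⊕ C),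
        (∀ (n : ℕ) (φ : PosForm L n) (v : Fin n → X), φ.Realize v →
          conSent φ (j ∘ v) ∈ tset ∪ dBset ∪ dCset ∪ idset ∪ neset) →
        ∃ h : X →[L] M, ∀ x, h x = (L.con (j x)).term.realize (default : Empty → M) := by
      intro X inst j hj
      refine ⟨{ toFun := fun x => (L.con (j x)).term.realize (default : Empty → M)
                map_fun' := ?_
                map_rel' := ?_ }, fun x => rfl⟩
      · intro n F v
        have hmem := hj (n + 1)
          (.equal (Term.func F fun i => Term.var i.castSucc) (Term.var (Fin.last n)))
          (Fin.snoc v (Structure.funMap F v))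
          (by
            simp only [PosForm.Realize, Term.realize_func, Term.realize_var, Fin.snoc_castSucc,
              Fin.snoc_last])
        have hM := (realize_conSent M _ _).mp (hreal _ hmem)
        have hM2 : Term.realize (M := M)
            (fun i => ((L.con ((j ∘ Fin.snoc v (Structure.funMap F v)) i)).term.realize
              (default : Empty → M)))
            (Term.func F fun i => Term.var i.castSucc) =
            Term.realize (M := M)
            (fun i => ((L.con ((j ∘ Fin.snoc v (Structure.funMap F v)) i)).term.realize
              (default : Empty → M))) (Term.var (Fin.last n)) := hM
        simp only [Term.realize_func, Term.realize_var, Function.comp_apply, Fin.snoc_castSucc,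
          Fin.snoc_last] at hM2
        exact hM2.symm
      · intro n R v hv
        have hmem := hj n (.rel R fun i => Term.var i) v
          (by simpa only [PosForm.Realize, Term.realize_var] using hv)
        have hM := (realize_conSent M _ _).mp (hreal _ hmem)
        have hM2 : Structure.RelMap (M := M) R (fun i =>
            Term.realize (M := M)
            (fun i => ((L.con ((j ∘ v) i)).term.realize (default : Empty → M)))
            (Term.var i : L.Term (Fin n))) := hM
        have heq : (fun i => Term.realize (M := M)
            (fun i => ((L.con ((j ∘ v) i)).term.realize (default : Empty → M)))
            (Term.var i : L.Term (Fin n)))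
            = fun i => (L.con (j (v i))).term.realize (default : Empty → M) := by
          funext i; rw [Term.realize_var]; rfl
        rwa [heq] at hM2
    obtain ⟨f', hf'⟩ := mkHom B _ Sum.inl fun n φ v h1 =>
      Or.inl (Or.inl (Or.inl (Or.inr ⟨n, φ, v, h1, rfl⟩)))
    obtain ⟨g', hg'⟩ := mkHom C _ Sum.inr fun n φ v h1 =>
      Or.inl (Or.inl (Or.inr ⟨n, φ, v, h1, rfl⟩))
    refine ⟨M, inferInstance, f', g', ?_, ?_, ?_⟩
    · intro s hs
      exact (realize_hindSent M s).mp
        (hreal _ (Or.inl (Or.inl (Or.inl (Or.inl ⟨s, hs, rfl⟩)))))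
    · refine Hom.ext fun a => ?_
      have hmem : eqSent (Sum.inl (f a) : B ⊕ C) (Sum.inr (g a)) ∈
          tset ∪ dBset ∪ dCset ∪ idset ∪ neset := Or.inl (Or.inr ⟨a, rfl⟩)
      have := (realize_eqSent M _ _).mp (hreal _ hmem)
      show f' (f a) = g' (g a)
      rw [hf', hg']
      exact this
    · intro b c hb hc hbc
      have hmem : neSent (Sum.inl b : B ⊕ C) (Sum.inr c) ∈
          tset ∪ dBset ∪ dCset ∪ idset ∪ neset := Or.inr ⟨b, c, hb, hc, rfl⟩
      refine (realize_neSent M _ _).mp (hreal _ hmem) ?_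
      rw [← hf' b, ← hg' c]
      exact hbc
end PositiveLogic
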